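/- For an Eulerian poset P of rank d ≥ 1, the polynomial H(P,t) satisfies the symmetry H(P,t) = t^{d−1} H(P, t^{−1}). -/

import Mathlib

open Finset Polynomial
open scoped Classical

/-- The defining recursion of the Möbius function of a finite poset. -/
def MobiusRec {P : Type*} [PartialOrder P] [Fintype P] (mu : P → P → ℤ) : Prop :=
  (∀ x : P, mu x x = 1) ∧
    ∀ x y : P, x < y → (∑ z : P, if x ≤ z ∧ z ≤ y then mu x z else 0) = 0

/-- A finite poset with rank function `ρ` is Eulerian if its Möbius function satisfies
`μ(x,y) = (-1)^(ρ(y) - ρ(x))` for all `x ≤ y`. -/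
def IsEulerian {P : Type*} [PartialOrder P] [Fintype P] (ρ : P → ℕ) : Prop :=
  ∀ mu : P → P → ℤ, MobiusRec mu → ∀ x y : P, x ≤ y → mu x y = (-1 : ℤ) ^ (ρ y - ρ x)

/-- `ρ` is a rank function of rank `d`: `ρ(⊥) = 0`, `ρ(⊤) = d`, `ρ` is monotone and
increases by one along covering relations. -/
def IsRankFunction {P : Type*} [PartialOrder P] [BoundedOrder P] (ρ : P → ℕ) (d : ℕ) : Prop :=
  ρ ⊥ = 0 ∧ ρ ⊤ = d ∧ Monotone ρ ∧ ∀ x y : P, x ⋖ y → ρ y = ρ x + 1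

/-- The truncation operator `τ_{< d/2}`, keeping only the terms of degree `< d/2`
(that is, `2*i < d`). -/
noncomputable def truncLtHalf (d : ℕ) (p : Polynomial ℤ) : Polynomial ℤ :=
  ∑ i ∈ Finset.range (p.natDegree + 1),
    if 2 * i < d then Polynomial.C (p.coeff i) * Polynomial.X ^ i else 0

/-- Stanley's polynomials `G([x,y],t)` and `H([x,y],t)` of the intervals of a finite graded
poset `P` with rank function `ρ`, given by the recursion: `G = H = 1` on rank-0 intervals,
`H([x,y],t) = ∑_{x < z ≤ y} (t-1)^(ρ(z)-ρ(x)-1) G([z,y],t)`, and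
`G([x,y],t) = τ_{< (ρ(y)-ρ(x))/2} ((1-t) H([x,y],t))`. -/
def GHSystem {P : Type*} [PartialOrder P] [Fintype P] (ρ : P → ℕ)
    (G H : P → P → Polynomial ℤ) : Prop :=
  (∀ x : P, G x x = 1 ∧ H x x = 1) ∧
  (∀ x y : P, x < y →
      H x y = ∑ z : P,
        if x < z ∧ z ≤ y then (Polynomial.X - 1) ^ (ρ z - ρ x - 1) * G z y else 0) ∧
  (∀ x y : P, x < y → G x y = truncLtHalf (ρ y - ρ x) ((1 - Polynomial.X) * H x y))

namespace HSymAux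

variable {P : Type*} [PartialOrder P] [Fintype P]

/-! ### The Möbius function -/

noncomputable def muFun (x : P) (y : P) : ℤ :=
  if x = y then 1
  else -∑ z ∈ (Finset.univ.filter fun z : P => x ≤ z ∧ z < y).attach, muFun x z.1
termination_by (Finset.univ.filter fun z : P => z < y).card
decreasing_by
  have hz := z.2
  simp only [Finset.mem_filter, Finset.mem_univ, true_and] at hz
  apply Finset.card_lt_card
  constructor
  · intro w hw
    simp only [Finset.mem_filter, Finset.mem_univ, true_and] at hw ⊢
    exact hw.trans hz.2
  · intro hsub
    have := hsub (by simp [hz.2] : (z : P) ∈ Finset.univ.filter fun w : P => w < y)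
    simp at this

lemma muFun_apply (x y : P) :
    muFun x y = if x = y then 1
      else -∑ z ∈ Finset.univ.filter (fun z : P => x ≤ z ∧ z < y), muFun x z := by
  rw [muFun, Finset.sum_attach]

lemma mobiusRec_muFun : MobiusRec (muFun (P := P)) := by
  constructor
  · intro x; rw [muFun_apply]; simp
  · intro x y hxy
    have hsplit : ∀ z : P, (if x ≤ z ∧ z ≤ y then muFun x z else 0)
        = (if x ≤ z ∧ z < y then muFun x z else 0) + (if z = y then muFun x y else 0) := by
      intro z
      by_cases hz : z = y
      · subst hz
        simp [hxy.le, lt_irrefl]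
      · simp only [hz, if_false, add_zero]
        have h : (x ≤ z ∧ z ≤ y) ↔ (x ≤ z ∧ z < y) := by
          constructor
          · rintro ⟨h1, h2⟩; exact ⟨h1, lt_of_le_of_ne h2 hz⟩
          · rintro ⟨h1, h2⟩; exact ⟨h1, h2.le⟩
        rw [if_congr h rfl rfl]
    rw [Finset.sum_congr rfl (fun z _ => hsplit z), Finset.sum_add_distrib,
      Finset.sum_ite_eq' Finset.univ y (fun _ => muFun x y)]
    simp only [Finset.mem_univ, if_true]
    rw [muFun_apply x y, if_neg hxy.ne, ← Finset.sum_filter]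
    ring

/-! ### Euler relations -/

lemma euler_closed (ρ : P → ℕ) (hE : IsEulerian ρ) (x w : P) (hxw : x < w) :
    (∑ z : P, if x ≤ z ∧ z ≤ w then ((-1 : ℤ)) ^ (ρ z - ρ x) else 0) = 0 := by
  have hmu := mobiusRec_muFun (P := P)
  refine Eq.trans (Finset.sum_congr rfl fun z _ => ?_) (hmu.2 x w hxw)
  split_ifs with hz
  · exact (hE _ hmu x z hz.1).symm
  · rfl

lemma euler_open (ρ : P → ℕ) (hE : IsEulerian ρ) (x w : P) (hxw : x < w) :
    (∑ z : P, if x < z ∧ z < w then ((-1 : ℤ)) ^ (ρ z - ρ x) else 0)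
      = -1 - (-1 : ℤ) ^ (ρ w - ρ x) := by
  have h := euler_closed ρ hE x w hxw
  have hsplit : ∀ z : P, (if x ≤ z ∧ z ≤ w then ((-1 : ℤ)) ^ (ρ z - ρ x) else 0)
      = (if x < z ∧ z < w then ((-1 : ℤ)) ^ (ρ z - ρ x) else 0)
        + (if z = x then ((-1 : ℤ)) ^ (ρ z - ρ x) else 0)
        + (if z = w then ((-1 : ℤ)) ^ (ρ z - ρ x) else 0) := by
    intro z
    by_cases hzx : z = x
    · subst hzx
      simp [le_refl, hxw.le, lt_irrefl, hxw.ne]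
    · by_cases hzw : z = w
      · subst hzw
        simp [hxw.le, lt_irrefl, hzx]
      · simp only [hzx, hzw, if_false, add_zero]
        have h : (x ≤ z ∧ z ≤ w) ↔ (x < z ∧ z < w) := by
          constructor
          · rintro ⟨h1, h2⟩
            exact ⟨lt_of_le_of_ne h1 (Ne.symm hzx), lt_of_le_of_ne h2 hzw⟩
          · rintro ⟨h1, h2⟩; exact ⟨h1.le, h2.le⟩
        rw [if_congr h rfl rfl]
  rw [Finset.sum_congr rfl (fun z _ => hsplit z), Finset.sum_add_distrib,
    Finset.sum_add_distrib, Finset.sum_ite_eq' Finset.univ x,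
    Finset.sum_ite_eq' Finset.univ w] at h
  simp only [Finset.mem_univ, if_true, Nat.sub_self, pow_zero] at h
  linarith

/-! ### Rank facts -/

lemma rank_lt (ρ : P → ℕ) (hmono : Monotone ρ)
    (hcov : ∀ x y : P, x ⋖ y → ρ y = ρ x + 1) {x y : P} (h : x < y) : ρ x < ρ y := by
  obtain ⟨z, hxz, hzy⟩ : ∃ z, x ≤ z ∧ z ⋖ y := by
    obtain ⟨m, hm, hmax⟩ := (Finset.univ.filter fun z : P => x ≤ z ∧ z < y).exists_maximal
      ⟨x, by simp [h]⟩
    simp only [Finset.mem_filter, Finset.mem_univ, true_and] at hm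
    refine ⟨m, hm.1, hm.2, fun c hc1 hc2 => ?_⟩
    exact lt_irrefl m (lt_of_lt_of_le hc1
      (hmax (by simpa using (⟨hm.1.trans hc1.le, hc2⟩ : x ≤ c ∧ c < y)) hc1.le))
  have h1 := hcov z y hzy
  have h2 := hmono hxz
  omega

/-! ### Polynomial lemmas -/

lemma truncLtHalf_coeff (n : ℕ) (p : Polynomial ℤ) (k : ℕ) :
    (truncLtHalf n p).coeff k = if 2 * k < n then p.coeff k else 0 := by
  unfold truncLtHalf
  rw [Polynomial.finset_sum_coeff]
  have hterm : ∀ i, ((if 2 * i < n then Polynomial.C (p.coeff i) * Polynomial.X ^ i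
      else 0) : Polynomial ℤ).coeff k
      = if 2 * i < n then (p.coeff i) * (if k = i then 1 else 0) else 0 := by
    intro i
    by_cases h : 2 * i < n
    · simp [h, Polynomial.coeff_C_mul, Polynomial.coeff_X_pow]
    · simp [h]
  rw [Finset.sum_congr rfl (fun i _ => hterm i)]
  by_cases hk : k ≤ p.natDegree
  · rw [Finset.sum_eq_single_of_mem k (Finset.mem_range.2 (by omega))]
    · simp
    · intro i _ hik
      simp [Ne.symm hik]
  · have hc : p.coeff k = 0 := Polynomial.coeff_eq_zero_of_natDegree_lt (by omega)
    rw [Finset.sum_eq_zero, hc]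
    · simp
    · intro i hi
      have : k ≠ i := by
        have := Finset.mem_range.1 hi; omega
      simp [this]

lemma truncLtHalf_natDegree_le (n : ℕ) (p : Polynomial ℤ) :
    (truncLtHalf n p).natDegree ≤ n := by
  rw [Polynomial.natDegree_le_iff_coeff_eq_zero]
  intro m hm
  rw [truncLtHalf_coeff]
  have : ¬ 2 * m < n := by omega
  simp [this]

lemma reflect_finset_sum {ι : Type*} (N : ℕ) (s : Finset ι) (f : ι → Polynomial ℤ) :
    (∑ i ∈ s, f i).reflect N = ∑ i ∈ s, (f i).reflect N := by
  induction s using Finset.induction_on with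
  | empty => simp [Polynomial.reflect_zero]
  | insert a s h ih => simp [Finset.sum_insert h, Polynomial.reflect_add, ih]

lemma natDegree_X_sub_one_pow_le (k : ℕ) :
    ((Polynomial.X - 1 : Polynomial ℤ) ^ k).natDegree ≤ k := by
  refine (Polynomial.natDegree_pow_le).trans ?_
  have : (Polynomial.X - 1 : Polynomial ℤ) = Polynomial.X - Polynomial.C 1 := by simp
  rw [this, Polynomial.natDegree_X_sub_C]
  omega

lemma reflect_X_sub_one_pow (k : ℕ) :
    ((Polynomial.X - 1 : Polynomial ℤ) ^ k).reflect k
      = (1 - Polynomial.X) ^ k := by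
  induction k with
  | zero => simp [Polynomial.reflect_one]
  | succ k ih =>
    have hd1 : (Polynomial.X - 1 : Polynomial ℤ).natDegree ≤ 1 := by
      have : (Polynomial.X - 1 : Polynomial ℤ) = Polynomial.X - Polynomial.C 1 := by simp
      rw [this, Polynomial.natDegree_X_sub_C]
    have h2 : (Polynomial.X - 1 : Polynomial ℤ).reflect 1 = 1 - Polynomial.X := by
      rw [Polynomial.reflect_sub, Polynomial.reflect_one, Polynomial.reflect_one_X]
      ring
    rw [show k + 1 = 1 + k from Nat.add_comm k 1, pow_add, pow_add, pow_one, pow_one,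
      Polynomial.reflect_mul _ _ hd1 (natDegree_X_sub_one_pow_le k), h2, ih]

lemma one_sub_X_pow (k : ℕ) : (1 - Polynomial.X : Polynomial ℤ) ^ k
    = Polynomial.C ((-1 : ℤ) ^ k) * (Polynomial.X - 1) ^ k := by
  have h : (Polynomial.C (-1 : ℤ)) * (Polynomial.X - 1) = 1 - Polynomial.X := by
    rw [map_neg, Polynomial.C_1]; ring
  rw [map_pow, ← mul_pow, h]

lemma Gref (n : ℕ) (hn : 1 ≤ n) (Hp : Polynomial ℤ) (hdeg : Hp.natDegree ≤ n - 1)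
    (hsym : Hp = Hp.reflect (n - 1)) :
    ((truncLtHalf n ((1 - Polynomial.X) * Hp)).reflect n)
      = truncLtHalf n ((1 - Polynomial.X) * Hp) - (1 - Polynomial.X) * Hp := by
  set f := (1 - Polynomial.X) * Hp with hf
  have hd1 : (1 - Polynomial.X : Polynomial ℤ).natDegree ≤ 1 := by
    have : (1 - Polynomial.X : Polynomial ℤ) = -(Polynomial.X - Polynomial.C 1) := by
      rw [Polynomial.C_1]; ring
    rw [this, Polynomial.natDegree_neg, Polynomial.natDegree_X_sub_C]
  have hanti : f.reflect n = -f := by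
    have h1 : f.reflect (1 + (n - 1))
        = ((1 - Polynomial.X : Polynomial ℤ)).reflect 1 * Hp.reflect (n - 1) :=
      Polynomial.reflect_mul _ _ hd1 hdeg
    rw [show (1 : ℕ) + (n - 1) = n by omega] at h1
    rw [h1, Polynomial.reflect_sub, Polynomial.reflect_one, Polynomial.reflect_one_X, ← hsym, hf]
    ring
  have hfc : ∀ i, f.coeff (Polynomial.revAt n i) = - f.coeff i := by
    intro i
    have := congrArg (fun q => Polynomial.coeff q i) hanti
    simpa [Polynomial.coeff_reflect] using this
  ext i
  rw [Polynomial.coeff_reflect, Polynomial.coeff_sub, truncLtHalf_coeff, truncLtHalf_coeff]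
  by_cases hi : i ≤ n
  · rw [Polynomial.revAt_le hi]
    have hrev : f.coeff (n - i) = - f.coeff i := by
      have := hfc i; rwa [Polynomial.revAt_le hi] at this
    rcases lt_trichotomy (2 * i) n with h | h | h
    · have h1 : ¬ 2 * (n - i) < n := by omega
      simp [h, h1]
    · have h1 : ¬ 2 * (n - i) < n := by omega
      have h2 : ¬ 2 * i < n := by omega
      have h3 : f.coeff i = 0 := by
        have : n - i = i := by omega
        rw [this] at hrev; omega
      simp [h1, h2, h3]
    · have h1 : 2 * (n - i) < n := by omega
      have h2 : ¬ 2 * i < n := by omega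
      simp [h1, h2, hrev]
  · rw [Polynomial.revAt_eq_self_of_lt (by omega)]
    have h2 : ¬ 2 * i < n := by omega
    have h3 : f.coeff i = 0 := by
      have := hfc i
      rw [Polynomial.revAt_eq_self_of_lt (by omega)] at this
      omega
    simp [h2, h3]

/-! ### Degree bounds for G and H -/

variable (ρ : P → ℕ) (G H : P → P → Polynomial ℤ)

lemma degG (hGH : GHSystem ρ G H) {x y : P} (h : x < y) :
    (G x y).natDegree ≤ ρ y - ρ x := by
  rw [hGH.2.2 x y h]
  exact truncLtHalf_natDegree_le _ _

lemma degH (hmono : Monotone ρ) (hcov : ∀ x y : P, x ⋖ y → ρ y = ρ x + 1)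
    (hGH : GHSystem ρ G H) {x y : P} (h : x < y) :
    (H x y).natDegree ≤ ρ y - ρ x - 1 := by
  rw [hGH.2.1 x y h]
  apply Polynomial.natDegree_sum_le_of_forall_le
  intro z _
  by_cases hz : x < z ∧ z ≤ y
  · rw [if_pos hz]
    refine (Polynomial.natDegree_mul_le).trans ?_
    have h1 := natDegree_X_sub_one_pow_le (ρ z - ρ x - 1)
    have hxz : ρ x < ρ z := rank_lt ρ hmono hcov hz.1
    have hzy : ρ z ≤ ρ y := hmono hz.2
    rcases eq_or_lt_of_le hz.2 with rfl | hzy'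
    · rw [(hGH.1 z).1, Polynomial.natDegree_one]
      omega
    · have h2 : (G z y).natDegree ≤ ρ y - ρ z := degG ρ G H hGH hzy'
      have hρ : ρ z < ρ y := rank_lt ρ hmono hcov hzy'
      omega
  · rw [if_neg hz]
    simp

/-! ### The main induction -/

lemma main (hE : IsEulerian ρ) (hmono : Monotone ρ)
    (hcov : ∀ x y : P, x ⋖ y → ρ y = ρ x + 1) (hGH : GHSystem ρ G H) :
    ∀ n : ℕ, ∀ x y : P, x < y → ρ y - ρ x = n → H x y = (H x y).reflect (n - 1) := by
  intro n
  induction n using Nat.strong_induction_on with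
  | _ n IH =>
  intro x y hxy hn
  have hxylt : ρ x < ρ y := rank_lt ρ hmono hcov hxy
  have hn1 : 1 ≤ n := by omega
  -- reflection formula for G on proper subintervals, by induction
  have hGz : ∀ z : P, x < z → z < y →
      (G z y).reflect (ρ y - ρ z) = G z y - (1 - Polynomial.X) * H z y := by
    intro z hxz hzy
    have hρ : ρ z < ρ y := rank_lt ρ hmono hcov hzy
    have hρx : ρ x < ρ z := rank_lt ρ hmono hcov hxz
    have hIH : H z y = (H z y).reflect (ρ y - ρ z - 1) :=
      IH (ρ y - ρ z) (by omega) z y hzy rfl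
    have hkey := Gref (ρ y - ρ z) (by omega) (H z y)
      (degH ρ G H hmono hcov hGH hzy) hIH
    rw [hGH.2.2 z y hzy]
    exact hkey
  have hH := hGH.2.1 x y hxy
  set A := ∑ z : P, if x < z ∧ z < y
      then (1 - Polynomial.X) ^ (ρ z - ρ x - 1) * G z y else 0 with hA
  set B := ∑ z : P, if x < z ∧ z < y
      then (1 - Polynomial.X) ^ (ρ z - ρ x) * H z y else 0 with hB
  -- Step 1: the reflection of H x y
  have hrefl : (H x y).reflect (n - 1) = A - B + (1 - Polynomial.X) ^ (n - 1) := by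
    rw [hH, reflect_finset_sum]
    have hterm : ∀ z : P,
        ((if x < z ∧ z ≤ y then (Polynomial.X - 1) ^ (ρ z - ρ x - 1) * G z y
          else 0).reflect (n - 1))
        = (if x < z ∧ z < y then
            (1 - Polynomial.X) ^ (ρ z - ρ x - 1) * G z y
            - (1 - Polynomial.X) ^ (ρ z - ρ x) * H z y else 0)
          + (if z = y then (1 - Polynomial.X) ^ (n - 1) else 0) := by
      intro z
      by_cases hzy : z = y
      · subst hzy
        rw [if_pos ⟨hxy, le_refl z⟩, if_neg (by simp [lt_irrefl]), if_pos rfl, (hGH.1 z).1,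
          mul_one, show ρ z - ρ x - 1 = n - 1 by omega, reflect_X_sub_one_pow, zero_add]
      · by_cases hz : x < z ∧ z ≤ y
        · have hzy' : z < y := lt_of_le_of_ne hz.2 hzy
          rw [if_pos hz, if_pos ⟨hz.1, hzy'⟩, if_neg hzy, add_zero]
          have hρx : ρ x < ρ z := rank_lt ρ hmono hcov hz.1
          have hρy : ρ z < ρ y := rank_lt ρ hmono hcov hzy'
          have hm : (ρ z - ρ x - 1) + (ρ y - ρ z) = n - 1 := by omega
          have h1 : ((Polynomial.X - 1) ^ (ρ z - ρ x - 1) * G z y).reflect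
                ((ρ z - ρ x - 1) + (ρ y - ρ z))
              = ((Polynomial.X - 1 : Polynomial ℤ) ^ (ρ z - ρ x - 1)).reflect (ρ z - ρ x - 1)
                * (G z y).reflect (ρ y - ρ z) :=
            Polynomial.reflect_mul _ _ (natDegree_X_sub_one_pow_le _)
              (degG ρ G H hGH hzy')
          rw [hm] at h1
          rw [h1, reflect_X_sub_one_pow, hGz z hz.1 hzy']
          have hpow : (1 - Polynomial.X : Polynomial ℤ) ^ (ρ z - ρ x)
              = (1 - Polynomial.X) ^ (ρ z - ρ x - 1) * (1 - Polynomial.X) := by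
            rw [← pow_succ, show (ρ z - ρ x - 1) + 1 = ρ z - ρ x by omega]
          rw [hpow]
          ring
        · rw [if_neg hz, if_neg (fun hc => hz ⟨hc.1, hc.2.le⟩), if_neg hzy,
            Polynomial.reflect_zero, zero_add]
    rw [Finset.sum_congr rfl (fun z _ => hterm z), Finset.sum_add_distrib]
    congr 1
    · rw [hA, hB, ← Finset.sum_sub_distrib]
      refine Finset.sum_congr rfl fun z _ => ?_
      split_ifs with h
      · rfl
      · simp
    · rw [Finset.sum_ite_eq' Finset.univ y]
      simp
  -- Step 2: evaluation of B
  have hBval : B = A + (1 - Polynomial.X) ^ (n - 1) - H x y := by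
    have hstep1 : B = ∑ z : P, ∑ w : P,
        if (x < w ∧ w ≤ y) ∧ (x < z ∧ z < w) then
          (1 - Polynomial.X) ^ (ρ z - ρ x)
            * ((Polynomial.X - 1) ^ (ρ w - ρ z - 1) * G w y) else 0 := by
      rw [hB]
      refine Finset.sum_congr rfl fun z _ => ?_
      by_cases hz : x < z ∧ z < y
      · rw [if_pos hz, hGH.2.1 z y hz.2, Finset.mul_sum]
        refine Finset.sum_congr rfl fun w _ => ?_
        rw [mul_ite, mul_zero]
        by_cases hw : z < w ∧ w ≤ y
        · rw [if_pos hw, if_pos ⟨⟨lt_trans hz.1 hw.1, hw.2⟩, hz.1, hw.1⟩]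
        · rw [if_neg hw, if_neg (fun hc => hw ⟨hc.2.2, hc.1.2⟩)]
      · rw [if_neg hz, Finset.sum_eq_zero]
        intro w _
        rw [if_neg]
        rintro ⟨hw, hzw⟩
        exact hz ⟨hzw.1, lt_of_lt_of_le hzw.2 hw.2⟩
    rw [hstep1, Finset.sum_comm]
    have hstep2 : ∀ w : P, (∑ z : P,
        if (x < w ∧ w ≤ y) ∧ (x < z ∧ z < w) then
          (1 - Polynomial.X) ^ (ρ z - ρ x)
            * ((Polynomial.X - 1) ^ (ρ w - ρ z - 1) * G w y) else 0)
        = if x < w ∧ w ≤ y then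
            ((1 - Polynomial.X) ^ (ρ w - ρ x - 1)
              - (Polynomial.X - 1) ^ (ρ w - ρ x - 1)) * G w y
          else 0 := by
      intro w
      by_cases hw : x < w ∧ w ≤ y
      · rw [if_pos hw]
        have hterm2 : ∀ z : P, (if (x < w ∧ w ≤ y) ∧ (x < z ∧ z < w) then
              (1 - Polynomial.X) ^ (ρ z - ρ x)
                * ((Polynomial.X - 1) ^ (ρ w - ρ z - 1) * G w y) else 0)
            = (if x < z ∧ z < w then Polynomial.C ((-1 : ℤ) ^ (ρ z - ρ x)) else 0)
              * ((Polynomial.X - 1) ^ (ρ w - ρ x - 1) * G w y) := by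
          intro z
          by_cases hz : x < z ∧ z < w
          · rw [if_pos ⟨hw, hz⟩, if_pos hz]
            have hρ1 : ρ x < ρ z := rank_lt ρ hmono hcov hz.1
            have hρ2 : ρ z < ρ w := rank_lt ρ hmono hcov hz.2
            rw [one_sub_X_pow]
            have e2 : (Polynomial.X - 1 : Polynomial ℤ) ^ (ρ z - ρ x)
                  * (Polynomial.X - 1) ^ (ρ w - ρ z - 1)
                = (Polynomial.X - 1) ^ (ρ w - ρ x - 1) := by
              rw [← pow_add, show (ρ z - ρ x) + (ρ w - ρ z - 1) = ρ w - ρ x - 1 by omega]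
            calc Polynomial.C ((-1 : ℤ) ^ (ρ z - ρ x)) * (Polynomial.X - 1) ^ (ρ z - ρ x)
                  * ((Polynomial.X - 1) ^ (ρ w - ρ z - 1) * G w y)
                = Polynomial.C ((-1 : ℤ) ^ (ρ z - ρ x))
                  * ((Polynomial.X - 1) ^ (ρ z - ρ x)
                    * (Polynomial.X - 1) ^ (ρ w - ρ z - 1) * G w y) := by ring
              _ = Polynomial.C ((-1 : ℤ) ^ (ρ z - ρ x))
                  * ((Polynomial.X - 1) ^ (ρ w - ρ x - 1) * G w y) := by rw [e2]
          · rw [if_neg (fun hc => hz hc.2), if_neg hz, zero_mul]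
        rw [Finset.sum_congr rfl (fun z _ => hterm2 z), ← Finset.sum_mul]
        have hsum : (∑ z : P, if x < z ∧ z < w
              then Polynomial.C ((-1 : ℤ) ^ (ρ z - ρ x)) else 0)
            = Polynomial.C (-1 - (-1 : ℤ) ^ (ρ w - ρ x)) := by
          have hC : ∀ z : P, (if x < z ∧ z < w
                then Polynomial.C ((-1 : ℤ) ^ (ρ z - ρ x)) else 0)
              = Polynomial.C (if x < z ∧ z < w then ((-1 : ℤ) ^ (ρ z - ρ x)) else 0) := by
            intro z
            split_ifs
            · rfl
            · rw [map_zero]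
          rw [Finset.sum_congr rfl (fun z _ => hC z), ← map_sum,
            euler_open ρ hE x w hw.1]
        rw [hsum]
        have hρ : ρ x < ρ w := rank_lt ρ hmono hcov hw.1
        have he : (-1 : ℤ) - (-1 : ℤ) ^ (ρ w - ρ x)
            = -1 + (-1 : ℤ) ^ (ρ w - ρ x - 1) := by
          have h5 : (-1 : ℤ) ^ (ρ w - ρ x) = (-1 : ℤ) ^ (ρ w - ρ x - 1) * (-1) := by
            rw [← pow_succ]
            congr 1
            omega
          rw [h5]; ring
        rw [he, map_add, map_neg, Polynomial.C_1, one_sub_X_pow (ρ w - ρ x - 1)]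
        ring
      · rw [if_neg hw, Finset.sum_eq_zero]
        intro z _
        rw [if_neg (fun hc => hw hc.1)]
    rw [Finset.sum_congr rfl (fun w _ => hstep2 w)]
    -- split the w = y term
    have hsplit : ∀ w : P, (if x < w ∧ w ≤ y then
            ((1 - Polynomial.X) ^ (ρ w - ρ x - 1)
              - (Polynomial.X - 1) ^ (ρ w - ρ x - 1)) * G w y
          else 0)
        = ((if x < w ∧ w < y then (1 - Polynomial.X) ^ (ρ w - ρ x - 1) * G w y else 0)
            + (if w = y then (1 - Polynomial.X) ^ (n - 1) else 0))
          - (if x < w ∧ w ≤ y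
              then (Polynomial.X - 1) ^ (ρ w - ρ x - 1) * G w y else 0) := by
      intro w
      by_cases hwy : w = y
      · subst hwy
        rw [if_pos ⟨hxy, le_refl w⟩, if_neg (by simp [lt_irrefl]), if_pos rfl,
          if_pos ⟨hxy, le_refl w⟩, (hGH.1 w).1, mul_one, mul_one,
          show ρ w - ρ x - 1 = n - 1 by omega]
        ring
      · by_cases hz : x < w ∧ w ≤ y
        · have hwy' : w < y := lt_of_le_of_ne hz.2 hwy
          rw [if_pos hz, if_pos ⟨hz.1, hwy'⟩, if_neg hwy, if_pos hz, add_zero]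
          ring
        · rw [if_neg hz, if_neg (fun hc => hz ⟨hc.1, hc.2.le⟩), if_neg hwy, if_neg hz]
          simp
    rw [Finset.sum_congr rfl (fun w _ => hsplit w), Finset.sum_sub_distrib,
      Finset.sum_add_distrib, Finset.sum_ite_eq' Finset.univ y, ← hH]
    simp only [Finset.mem_univ, if_true]
    rw [hA]
  rw [hrefl, hBval]
  ring

end HSymAux

/-- For an Eulerian poset `P` of rank `d ≥ 1`, Stanley's polynomial `H(P,t)` satisfies the
symmetry `H(P,t) = t^(d-1) H(P,t⁻¹)`, i.e. `H(P,t)` equals its own reflection at degree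
`d-1`. -/
theorem H_symmetry {P : Type*} [PartialOrder P] [BoundedOrder P] [Fintype P]
    (ρ : P → ℕ) (d : ℕ) (hrk : IsRankFunction ρ d) (hE : IsEulerian ρ)
    (G H : P → P → Polynomial ℤ) (hGH : GHSystem ρ G H) (hd : 1 ≤ d) :
    H ⊥ ⊤ = (H ⊥ ⊤).reflect (d - 1) := by
  obtain ⟨hb, ht, hmono, hcov⟩ := hrk
  have hbt : (⊥ : P) < ⊤ := by
    rcases lt_or_eq_of_le (bot_le : (⊥ : P) ≤ ⊤) with h | h
    · exact h
    · exfalso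
      rw [← h] at ht
      omega
  exact HSymAux.main ρ G H hE hmono hcov hGH d ⊥ ⊤ hbt (by omega)
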